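/- Let b > 1, x > 0, d_v, d_w ≥ 0, δ := x + d_v - d_w with 0 < δ ≤ x, and integer τ with 1 ≤ τ ≤ k-1. Consider the chunking with x_i = δ/τ for i ≤ τ and the remaining cost x - δ distributed over the last k - τ chunks as x_{τ+j} = (x-δ)·(b-1)^{k-τ-j}·b^{j-1}/(b^{k-τ} - (b-1)^{k-τ}). Then: (i) for every i ≤ τ, the perceived cost b·x_i + d_w equals α := bδ/τ + d_w; (ii) for every i > τ, the perceived cost b·x_i + ∑_{j>i} x_j + d_v equals β := (x-δ)/(1 - ((b-1)/b)^{k-τ}) + d_v; (iii) moreover, α = bδ/τ + d_w also equals b·x_τ + ∑_{j>τ} x_j + d_v, i.e., the τ-th chunk's perceived cost computed through the chunked continuation also equals α. -/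

import Mathlib

open Finset

lemma geom_aux (b : ℝ) : ∀ (n s : ℕ),
    ∑ t ∈ Finset.range n, (b - 1) ^ (n - 1 - t) * b ^ (s + t)
      = b ^ (s + n) - b ^ s * (b - 1) ^ n := by
  intro n
  induction n with
  | zero => intro s; simp
  | succ n ih =>
    intro s
    rw [Finset.sum_range_succ']
    have e1 : ∑ t ∈ Finset.range n, (b - 1) ^ (n + 1 - 1 - (t + 1)) * b ^ (s + (t + 1))
        = ∑ t ∈ Finset.range n, (b - 1) ^ (n - 1 - t) * b ^ ((s + 1) + t) :=
      Finset.sum_congr rfl (fun t _ => by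
        rw [show n + 1 - 1 - (t + 1) = n - 1 - t from by omega,
            show s + (t + 1) = (s + 1) + t from by omega])
    rw [e1, ih (s + 1), show n + 1 - 1 - 0 = n from by omega,
        show s + 1 + n = s + n + 1 from by omega,
        show s + (n + 1) = s + n + 1 from by omega]
    simp only [pow_succ, pow_zero, add_zero]
    ring

theorem stmt_11 (b x dv dw : ℝ) (hb : 1 < b) (hx : 0 < x)
    (hdv : 0 ≤ dv) (hdw : 0 ≤ dw)
    (k τ : ℕ) (hτ1 : 1 ≤ τ) (hτk : τ ≤ k - 1) (hk : 2 ≤ k)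
    (δ : ℝ) (hδdef : δ = x + dv - dw) (hδpos : 0 < δ) (hδle : δ ≤ x)
    (xi : ℕ → ℝ)
    (hxi : ∀ i ∈ Finset.Icc 1 k,
      xi i = if i ≤ τ then δ / τ
        else (x - δ) * (b - 1) ^ (k - i) * b ^ (i - τ - 1)
              / (b ^ (k - τ) - (b - 1) ^ (k - τ))) :
    (∀ i ∈ Finset.Icc 1 τ, b * xi i + dw = b * δ / τ + dw) ∧
    (∀ i ∈ Finset.Icc (τ + 1) k,
      b * xi i + (∑ j ∈ Finset.Icc (i + 1) k, xi j) + dv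
        = (x - δ) / (1 - ((b - 1) / b) ^ (k - τ)) + dv) ∧
    (b * xi τ + (∑ j ∈ Finset.Icc (τ + 1) k, xi j) + dv = b * δ / τ + dw) := by
  have hτk' : τ + 1 ≤ k := by omega
  have hb0 : 0 < b := by linarith
  have hb1 : 0 < b - 1 := by linarith
  have hD : 0 < b ^ (k - τ) - (b - 1) ^ (k - τ) := by
    have h1 : (b - 1) ^ (k - τ) < b ^ (k - τ) :=
      pow_lt_pow_left₀ (by linarith) (le_of_lt hb1) (by omega)
    linarith
  have hB : (0:ℝ) < b ^ (k - τ) := pow_pos hb0 _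
  -- closed form for the tail sums
  have hsum : ∀ i, τ ≤ i → i ≤ k →
      ∑ j ∈ Finset.Icc (i + 1) k, xi j
        = (x - δ) * (b ^ (k - τ) - b ^ (i - τ) * (b - 1) ^ (k - i))
            / (b ^ (k - τ) - (b - 1) ^ (k - τ)) := by
    intro i hi1 hi2
    have hcong : ∀ j ∈ Finset.Icc (i + 1) k,
        xi j = (x - δ) * ((b - 1) ^ (k - j) * b ^ (j - τ - 1))
            / (b ^ (k - τ) - (b - 1) ^ (k - τ)) := by
      intro j hj
      rw [Finset.mem_Icc] at hj
      rw [hxi j (Finset.mem_Icc.mpr ⟨by omega, hj.2⟩), if_neg (by omega)]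
      ring
    rw [Finset.sum_congr rfl hcong, ← Finset.sum_div, ← Finset.mul_sum]
    congr 2
    rw [← Finset.Ico_add_one_right_eq_Icc, Finset.sum_Ico_eq_sum_range,
        show k + 1 - (i + 1) = k - i from by omega]
    have e2 : ∀ t ∈ Finset.range (k - i),
        (b - 1) ^ (k - (i + 1 + t)) * b ^ ((i + 1 + t) - τ - 1)
          = (b - 1) ^ ((k - i) - 1 - t) * b ^ ((i - τ) + t) := by
      intro t ht
      rw [show k - (i + 1 + t) = (k - i) - 1 - t from by omega,
          show (i + 1 + t) - τ - 1 = (i - τ) + t from by omega]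
    rw [Finset.sum_congr rfl e2, geom_aux b (k - i) (i - τ),
        show (i - τ) + (k - i) = k - τ from by omega]
  refine ⟨?_, ?_, ?_⟩
  · intro i hi
    rw [Finset.mem_Icc] at hi
    rw [hxi i (Finset.mem_Icc.mpr ⟨hi.1, by omega⟩), if_pos hi.2]
    ring
  · intro i hi
    rw [Finset.mem_Icc] at hi
    rw [hxi i (Finset.mem_Icc.mpr ⟨by omega, hi.2⟩), if_neg (by omega),
        hsum i (by omega) hi.2]
    have hrhs : 1 - ((b - 1) / b) ^ (k - τ)
        = (b ^ (k - τ) - (b - 1) ^ (k - τ)) / b ^ (k - τ) := by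
      rw [div_pow]
      field_simp
    rw [hrhs]
    rw [show i - τ = (i - τ - 1) + 1 from by omega, Nat.add_sub_cancel, pow_succ]
    field_simp
    ring
  · rw [hxi τ (Finset.mem_Icc.mpr ⟨hτ1, by omega⟩), if_pos le_rfl,
        hsum τ le_rfl (by omega), show τ - τ = 0 from by omega, pow_zero, one_mul]
    rw [mul_div_assoc, div_self hD.ne', mul_one]
    have h1 : x - δ + dv = dw := by rw [hδdef]; ring
    have h2 : b * (δ / τ) = b * δ / τ := by ring
    linarith
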